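/- Expected-utility upper bound (inequality (sh1)): fix k ∈ {1,…,N}, let q > 0, R > 0, and let U : ℝ₊ → ℝ₊ be a Borel measurable function that is nondecreasing on [0,q], satisfies U(y) ≤ R·y for all y ∈ [0,q], U(y) = U(q) for all y ≥ q, and R = U(q)/q. With the partition events η_k = {ξ_k ≤ 0}, η_t = {ξ_k > 0, …, ξ_{t−1} > 0, ξ_t ≤ 0} for t = k+1, …, N−1, and η_N = {ξ_k > 0, …, ξ_{N−1} > 0}, let a_k, …, a_N ≥ 0 and let W : Ω → ℝ₊ be a bounded random variable such that W ≤ Σ_{τ=k}^t a_τ almost surely on η_t for every t ∈ {k, …, N}. Then R·q − E[U(W)] ≥ R · Σ_{t=k}^N P(η_t) · max{0, q − Σ_{τ=k}^t a_τ}. -/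

import Mathlib

open MeasureTheory

/-- The residual process: `ξ_0 = 0`, `ξ_{k+1} = max{0, ξ_k} + s_k - x_{k+1}`. -/
noncomputable def resid (x s : ℕ → ℝ) : ℕ → ℝ
  | 0 => 0
  | k + 1 => max 0 (resid x s k) + s k - x (k + 1)

/-- The events `η_k = {ξ_k ≤ 0}`, `η_t = {ξ_k > 0, …, ξ_{t-1} > 0, ξ_t ≤ 0}` for
`t = k+1, …, N-1`, and `η_N = {ξ_k > 0, …, ξ_{N-1} > 0}`. -/
def etaEvent (N : ℕ) {Ω : Type*} (x : ℕ → ℝ) (s : Ω → ℕ → ℝ) (k t : ℕ) : Set Ω :=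
  if t = N then {ω | ∀ j, k ≤ j → j < N → 0 < resid x (s ω) j}
  else {ω | (∀ j, k ≤ j → j < t → 0 < resid x (s ω) j) ∧ resid x (s ω) t ≤ 0}

lemma resid_meas {Ω : Type*} [MeasurableSpace Ω] (x : ℕ → ℝ) (s : Ω → ℕ → ℝ)
    (hmeas : Measurable s) (j : ℕ) : Measurable fun ω => resid x (s ω) j := by
  induction j with
  | zero => simpa [resid] using measurable_const
  | succ n ih =>
    have hsn : Measurable fun ω => s ω n := (measurable_pi_apply n).comp hmeas
    simp only [resid]
    exact ((measurable_const.max ih).add hsn).sub measurable_const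

lemma etaEvent_meas (N : ℕ) {Ω : Type*} [MeasurableSpace Ω] (x : ℕ → ℝ)
    (s : Ω → ℕ → ℝ) (hmeas : Measurable s) (k t : ℕ) :
    MeasurableSet (etaEvent N x s k t) := by
  have h1 : ∀ m : ℕ, MeasurableSet {ω : Ω | ∀ j, k ≤ j → j < m → 0 < resid x (s ω) j} := by
    intro m
    have : {ω : Ω | ∀ j, k ≤ j → j < m → 0 < resid x (s ω) j}
        = ⋂ j, ⋂ (_ : k ≤ j), ⋂ (_ : j < m), {ω | 0 < resid x (s ω) j} := by
      ext ω; simp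
    rw [this]
    exact MeasurableSet.iInter fun j => MeasurableSet.iInter fun _ =>
      MeasurableSet.iInter fun _ => measurableSet_lt measurable_const (resid_meas x s hmeas j)
  unfold etaEvent
  split
  · exact h1 N
  · have : {ω : Ω | (∀ j, k ≤ j → j < t → 0 < resid x (s ω) j) ∧ resid x (s ω) t ≤ 0}
        = {ω | ∀ j, k ≤ j → j < t → 0 < resid x (s ω) j} ∩ {ω | resid x (s ω) t ≤ 0} := rfl
    rw [this]
    exact (h1 t).inter (measurableSet_le (resid_meas x s hmeas t) measurable_const)

lemma etaEvent_exists (N : ℕ) {Ω : Type*} (x : ℕ → ℝ) (s : Ω → ℕ → ℝ) (k : ℕ)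
    (hkN : k ≤ N) (ω : Ω) : ∃ t ∈ Finset.Icc k N, ω ∈ etaEvent N x s k t := by
  by_cases h : ∃ j, k ≤ j ∧ j < N ∧ resid x (s ω) j ≤ 0
  · classical
    let t := Nat.find h
    obtain ⟨hkt, htN, hres⟩ := Nat.find_spec h
    refine ⟨t, Finset.mem_Icc.2 ⟨hkt, le_of_lt htN⟩, ?_⟩
    have htne : t ≠ N := Nat.ne_of_lt htN
    rw [etaEvent, if_neg htne]
    refine ⟨fun j hkj hjt => ?_, hres⟩
    have := Nat.find_min h hjt
    push_neg at this
    exact this hkj (lt_trans hjt htN)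
  · push_neg at h
    refine ⟨N, Finset.mem_Icc.2 ⟨hkN, le_refl N⟩, ?_⟩
    rw [etaEvent, if_pos rfl]
    exact fun j hkj hjN => h j hkj hjN

lemma etaEvent_disjoint (N : ℕ) {Ω : Type*} (x : ℕ → ℝ) (s : Ω → ℕ → ℝ) (k : ℕ)
    {t₁ t₂ : ℕ} (h12 : t₁ < t₂) (h2N : t₂ ≤ N) (hk1 : k ≤ t₁) (ω : Ω)
    (h1 : ω ∈ etaEvent N x s k t₁) (h2 : ω ∈ etaEvent N x s k t₂) : False := by
  have h1N : t₁ ≠ N := Nat.ne_of_lt (lt_of_lt_of_le h12 h2N)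
  rw [etaEvent, if_neg h1N] at h1
  have hpos : 0 < resid x (s ω) t₁ := by
    by_cases hN2 : t₂ = N
    · rw [etaEvent, if_pos hN2] at h2
      exact h2 t₁ hk1 (lt_of_lt_of_le h12 h2N)
    · rw [etaEvent, if_neg hN2] at h2
      exact h2.1 t₁ hk1 h12
  exact absurd h1.2 (not_le.2 hpos)


/-- Expected-utility upper bound (inequality (sh1)): with a utility
function `U` that is nondecreasing on `[0,q]`, bounded by `R·y` there, saturated at `q`
with `R = U(q)/q`, and a bounded nonnegative random delivery `W` satisfying
`W ≤ Σ_{τ=k}^t a_τ` a.s. on `η_t` for every `t ∈ {k,…,N}`, one has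
`R·q − E[U(W)] ≥ R · Σ_{t=k}^N P(η_t) · max{0, q − Σ_{τ=k}^t a_τ}`. -/
theorem expected_utility_upper_bound
    (N : ℕ) (hN : 1 ≤ N)
    {Ω : Type*} [MeasurableSpace Ω] (P : Measure Ω) [IsProbabilityMeasure P]
    (s : Ω → ℕ → ℝ) (hmeas : Measurable s)
    (hs : ∀ ω, ∀ j, j < N → 0 ≤ s ω j)
    (x : ℕ → ℝ) (hx : ∀ j, 1 ≤ j → j ≤ N → 0 ≤ x j)
    (k : ℕ) (hk : 1 ≤ k) (hkN : k ≤ N)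
    (q R : ℝ) (hq : 0 < q) (hRpos : 0 < R)
    (U : ℝ → ℝ) (hUmeas : Measurable U)
    (hUnonneg : ∀ y, 0 ≤ y → 0 ≤ U y)
    (hUmono : MonotoneOn U (Set.Icc 0 q))
    (hUlin : ∀ y ∈ Set.Icc (0 : ℝ) q, U y ≤ R * y)
    (hUsat : ∀ y, q ≤ y → U y = U q)
    (hRq : R = U q / q)
    (a : ℕ → ℝ) (ha : ∀ t ∈ Finset.Icc k N, 0 ≤ a t)
    (W : Ω → ℝ) (hWmeas : Measurable W)
    (hWnonneg : ∀ ω, 0 ≤ W ω) (C : ℝ) (hWbdd : ∀ ω, W ω ≤ C)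
    (hWle : ∀ t ∈ Finset.Icc k N, ∀ᵐ ω ∂P,
      ω ∈ etaEvent N x s k t → W ω ≤ ∑ τ ∈ Finset.Icc k t, a τ) :
    R * q - ∫ ω, U (W ω) ∂P ≥
      R * ∑ t ∈ Finset.Icc k N,
        (P (etaEvent N x s k t)).toReal * max 0 (q - ∑ τ ∈ Finset.Icc k t, a τ) := by
  classical
  set T := Finset.Icc k N with hT
  set A : ℕ → ℝ := fun t => ∑ τ ∈ Finset.Icc k t, a τ with hA
  set m : ℕ → ℝ := fun t => max 0 (q - A t) with hm
  set g : Ω → ℝ :=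
    fun ω => R * q - R * ∑ t ∈ T, (etaEvent N x s k t).indicator (fun _ => m t) ω with hg
  -- pointwise utility bound
  have hUb : ∀ y : ℝ, 0 ≤ y → U y ≤ R * q - R * max 0 (q - y) := by
    intro y hy
    rcases le_or_gt y q with hyq | hyq
    · have h1 : U y ≤ R * y := hUlin y ⟨hy, hyq⟩
      have h2 : max 0 (q - y) = q - y := max_eq_right (by linarith)
      rw [h2]; linarith
    · have h1 : U y = U q := hUsat y hyq.le
      have h2 : U q ≤ R * q := hUlin q ⟨hq.le, le_refl q⟩
      have h3 : max 0 (q - y) = 0 := max_eq_left (by linarith)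
      rw [h3]; linarith
  -- a.e. bound
  have hae : ∀ᵐ ω ∂P, ∀ t : T, ω ∈ etaEvent N x s k t.1 → W ω ≤ A t.1 :=
    MeasureTheory.ae_all_iff.2 fun t => hWle t.1 t.2
  have hptwise : ∀ᵐ ω ∂P, U (W ω) ≤ g ω := by
    filter_upwards [hae] with ω hω
    obtain ⟨t0, ht0T, ht0⟩ := etaEvent_exists N x s k hkN ω
    have hsum : (∑ t ∈ T, (etaEvent N x s k t).indicator (fun _ => m t) ω) = m t0 := by
      rw [Finset.sum_eq_single_of_mem t0 ht0T]
      · simp [Set.indicator_of_mem ht0]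
      · intro t htT hne
        have hnm : ω ∉ etaEvent N x s k t := by
          intro hmem
          rcases lt_or_gt_of_ne hne with h | h
          · exact etaEvent_disjoint N x s k h (Finset.mem_Icc.1 ht0T).2
              (Finset.mem_Icc.1 htT).1 ω hmem ht0
          · exact etaEvent_disjoint N x s k h (Finset.mem_Icc.1 htT).2
              (Finset.mem_Icc.1 ht0T).1 ω ht0 hmem
        simp [Set.indicator_of_notMem hnm]
    have hWA : W ω ≤ A t0 := hω ⟨t0, ht0T⟩ ht0
    have h1 : U (W ω) ≤ R * q - R * max 0 (q - W ω) := hUb (W ω) (hWnonneg ω)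
    have h2 : m t0 ≤ max 0 (q - W ω) :=
      max_le_max (le_refl 0) (by linarith)
    have h3 : R * m t0 ≤ R * max 0 (q - W ω) :=
      mul_le_mul_of_nonneg_left h2 hRpos.le
    rw [hg]; dsimp only; rw [hsum]; linarith
  -- integrability
  have hUW_int : Integrable (fun ω => U (W ω)) P := by
    refine ⟨(hUmeas.comp hWmeas).aestronglyMeasurable, ?_⟩
    apply MeasureTheory.HasFiniteIntegral.of_bounded (C := R * q)
    filter_upwards with ω
    rw [Real.norm_eq_abs, abs_of_nonneg (hUnonneg _ (hWnonneg ω))]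
    have := hUb (W ω) (hWnonneg ω)
    have hmx : 0 ≤ max 0 (q - W ω) := le_max_left _ _
    nlinarith
  have hind : ∀ t ∈ T, Integrable ((etaEvent N x s k t).indicator fun _ => m t) P :=
    fun t _ => (integrable_const (m t)).indicator (etaEvent_meas N x s hmeas k t)
  have hSint : Integrable (fun ω => ∑ t ∈ T, (etaEvent N x s k t).indicator (fun _ => m t) ω) P :=
    integrable_finset_sum T hind
  have hgint : Integrable g P := (integrable_const (R * q)).sub (hSint.const_mul R)
  -- integral of g
  have hgval : ∫ ω, g ω ∂P = R * q - R * ∑ t ∈ T, (P (etaEvent N x s k t)).toReal * m t := by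
    rw [hg, integral_sub (integrable_const _) (hSint.const_mul R), integral_const,
      integral_const_mul, integral_finset_sum T hind]
    have : ∀ t ∈ T, (∫ ω, (etaEvent N x s k t).indicator (fun _ => m t) ω ∂P)
        = (P (etaEvent N x s k t)).toReal * m t := by
      intro t _
      rw [integral_indicator_const (m t) (etaEvent_meas N x s hmeas k t), smul_eq_mul]
      rfl
    rw [Finset.sum_congr rfl this]
    simp
  have hle : ∫ ω, U (W ω) ∂P ≤ ∫ ω, g ω ∂P := integral_mono_ae hUW_int hgint hptwise
  rw [hgval] at hle
  have : R * ∑ t ∈ T, (P (etaEvent N x s k t)).toReal * max 0 (q - ∑ τ ∈ Finset.Icc k t, a τ)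
      = R * ∑ t ∈ T, (P (etaEvent N x s k t)).toReal * m t := rfl
  rw [ge_iff_le, this]
  linarith
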